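/- arXiv:2004.05965 — 2 statements merged into one kernel-verified Lean document; each statement's English description precedes it below -/
import Mathlib

section
/- Let Q, R, P be symmetric positive definite matrices of sizes n×n, m×m, nT×nT respectively, and let A ∈ ℝ^{n×n}, C ∈ ℝ^{m×n}. Define H as the block matrix stacking F = [0 ⋯ −A I], G = [0 ⋯ 0 C], and Π = [I_{nT} 0], and W = blkdiag(Q, R, P). Then HᵀW⁻¹H is positive definite. -/
open Matrix

lemma posDef_fromBlocks_diag {α β : Type*} [Fintype α] [Fintype β]
    [DecidableEq α] [DecidableEq β]
    {A : Matrix α α ℝ} {B : Matrix β β ℝ} (hA : A.PosDef) (hB : B.PosDef) :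
    (Matrix.fromBlocks A 0 0 B).PosDef := by
  rw [Matrix.posDef_iff_dotProduct_mulVec]
  constructor
  · rw [Matrix.IsHermitian, Matrix.fromBlocks_conjTranspose, hA.1.eq, hB.1.eq,
      Matrix.conjTranspose_zero, Matrix.conjTranspose_zero]
  · intro x hx
    have hst : star x = Sum.elim (star (x ∘ Sum.inl)) (star (x ∘ Sum.inr)) := by
      funext i; cases i <;> simp
    rw [Matrix.fromBlocks_mulVec, hst]
    have hx' : (Sum.elim (A *ᵥ (x ∘ Sum.inl) + 0 *ᵥ (x ∘ Sum.inr))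
        (0 *ᵥ (x ∘ Sum.inl) + B *ᵥ (x ∘ Sum.inr)))
        = Sum.elim (A *ᵥ (x ∘ Sum.inl)) (B *ᵥ (x ∘ Sum.inr)) := by
      simp
    rw [hx', sumElim_dotProduct_sumElim]
    have hcase : x ∘ Sum.inl ≠ 0 ∨ x ∘ Sum.inr ≠ 0 := by
      by_contra h
      push_neg at h
      apply hx
      funext i
      cases i with
      | inl a => exact congrFun h.1 a
      | inr b => exact congrFun h.2 b
    rcases hcase with h | h
    · have h1 := hA.dotProduct_mulVec_pos h
      have h2 := hB.posSemidef.dotProduct_mulVec_nonneg (x ∘ Sum.inr)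
      linarith
    · have h1 := hA.posSemidef.dotProduct_mulVec_nonneg (x ∘ Sum.inl)
      have h2 := hB.dotProduct_mulVec_pos h
      linarith

theorem stmt_2 {n m T : ℕ} (hT : 1 ≤ T)
    (A : Matrix (Fin n) (Fin n) ℝ) (C : Matrix (Fin m) (Fin n) ℝ)
    (Q : Matrix (Fin n) (Fin n) ℝ) (hQ : Q.PosDef)
    (R : Matrix (Fin m) (Fin m) ℝ) (hR : R.PosDef)
    (P : Matrix (Fin T × Fin n) (Fin T × Fin n) ℝ) (hP : P.PosDef)
    (F : Matrix (Fin n) (Fin (T + 1) × Fin n) ℝ)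
    (hF : F = Matrix.of fun i p =>
      if (p.1 : ℕ) = T then (if i = p.2 then (1 : ℝ) else 0)
      else if (p.1 : ℕ) = T - 1 then -A i p.2 else 0)
    (G : Matrix (Fin m) (Fin (T + 1) × Fin n) ℝ)
    (hG : G = Matrix.of fun i p => if (p.1 : ℕ) = T then C i p.2 else 0)
    (Pi0 : Matrix (Fin T × Fin n) (Fin (T + 1) × Fin n) ℝ)
    (hPi0 : Pi0 = Matrix.of fun q p =>
      if (q.1 : ℕ) = (p.1 : ℕ) ∧ q.2 = p.2 then (1 : ℝ) else 0)
    (H : Matrix (Fin n ⊕ (Fin m ⊕ Fin T × Fin n)) (Fin (T + 1) × Fin n) ℝ)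
    (hH : H = Matrix.of (Sum.elim (fun i => F i) (Sum.elim (fun i => G i) (fun q => Pi0 q))))
    (W : Matrix (Fin n ⊕ (Fin m ⊕ Fin T × Fin n)) (Fin n ⊕ (Fin m ⊕ Fin T × Fin n)) ℝ)
    (hW : W = Matrix.fromBlocks Q 0 0 (Matrix.fromBlocks R 0 0 P)) :
    (Hᵀ * W⁻¹ * H).PosDef := by
  have hWpd : W.PosDef := by
    rw [hW]
    exact posDef_fromBlocks_diag hQ (posDef_fromBlocks_diag hR hP)
  have hWinv : W⁻¹.PosDef := hWpd.inv
  -- key injectivity: H *ᵥ x = 0 → x = 0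
  have hInj : ∀ x : Fin (T + 1) × Fin n → ℝ, H *ᵥ x = 0 → x = 0 := by
    intro x hx
    -- first: x vanishes on blocks with index < T
    have h0 : ∀ p : Fin (T + 1) × Fin n, (p.1 : ℕ) < T → x p = 0 := by
      intro p hp
      have hq := congrFun hx (Sum.inr (Sum.inr (⟨⟨p.1, hp⟩, p.2⟩ : Fin T × Fin n)))
      simp only [Matrix.mulVec, hH, Matrix.of_apply, Sum.elim_inr, Pi.zero_apply] at hq
      rw [show (dotProduct (Pi0 (⟨⟨p.1, hp⟩, p.2⟩ : Fin T × Fin n)) x) = x p from ?_] at hq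
      · exact hq
      · rw [hPi0]
        unfold dotProduct
        rw [Finset.sum_eq_single p]
        · simp
        · intro b _ hb
          simp only [Matrix.of_apply]
          rw [if_neg, zero_mul]
          intro ⟨h1, h2⟩
          apply hb
          have : b.1 = p.1 := Fin.ext h1.symm
          exact Prod.ext this h2.symm
        · intro h; exact absurd (Finset.mem_univ p) h
    -- second: x vanishes on the last block
    have hlast : ∀ i : Fin n, x (Fin.last T, i) = 0 := by
      intro i
      have hq := congrFun hx (Sum.inl i)
      simp only [Matrix.mulVec, hH, Matrix.of_apply, Sum.elim_inl, Pi.zero_apply] at hq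
      rw [show (dotProduct (F i) x) = x (Fin.last T, i) from ?_] at hq
      · exact hq
      · rw [hF]
        unfold dotProduct
        rw [Finset.sum_eq_single ((Fin.last T, i) : Fin (T + 1) × Fin n)]
        · simp [Fin.last]
        · intro b _ hb
          simp only [Matrix.of_apply]
          by_cases h1 : (b.1 : ℕ) = T
          · rw [if_pos h1]
            have : b.1 = Fin.last T := Fin.ext (by simp [Fin.last, h1])
            by_cases h2 : i = b.2
            · exact absurd (Prod.ext this h2.symm) hb
            · rw [if_neg h2, zero_mul]
          · rw [if_neg h1]
            by_cases h2 : (b.1 : ℕ) = T - 1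
            · rw [if_pos h2]
              have : x b = 0 := h0 b (by omega)
              rw [this, mul_zero]
            · rw [if_neg h2, zero_mul]
        · intro h; exact absurd (Finset.mem_univ _) h
    funext p
    rcases lt_or_eq_of_le (Nat.lt_succ_iff.mp p.1.isLt) with h | h
    · exact h0 p h
    · have : p = (Fin.last T, p.2) := Prod.ext (Fin.ext (by simp [Fin.last, h])) rfl
      rw [this]; exact hlast p.2
  rw [Matrix.posDef_iff_dotProduct_mulVec]
  constructor
  · have := Matrix.isHermitian_conjTranspose_mul_mul H hWinv.1
    rwa [Matrix.conjTranspose_eq_transpose_of_trivial] at this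
  · intro x hx
    have hHx : H *ᵥ x ≠ 0 := fun h => hx (hInj x h)
    have := hWinv.dotProduct_mulVec_pos hHx
    have hrw : star x ⬝ᵥ ((Hᵀ * W⁻¹ * H) *ᵥ x)
        = star (H *ᵥ x) ⬝ᵥ (W⁻¹ *ᵥ (H *ᵥ x)) := by
      rw [← Matrix.conjTranspose_eq_transpose_of_trivial H]
      simp only [star_mulVec, Matrix.dotProduct_mulVec, Matrix.vecMul_vecMul]
    rw [hrw]
    exact this
end

section
/- Let Jᵢ : ℝ^d → ℝ be differentiable convex functions, G = (V, E) a connected graph, and L_ρ(x, r, λ, μ) = Σᵢ [Jᵢ(xᵢ) + Σ_{j∈N(i)} (λᵢⱼᵀ(xᵢ − rᵢⱼ) + μᵢⱼᵀ(xⱼ − rᵢⱼ)) + (ρ/2) Σ_{j∈N(i)} (‖xᵢ − rᵢⱼ‖² + ‖xⱼ − rᵢⱼ‖²)] with ρ > 0. If x* minimizes Σᵢ Jᵢ, then setting xᵢ = x*, rᵢⱼ = x*, and choosing λᵢⱼ, μᵢⱼ such that Σ_{j∈N(i)}(λᵢⱼ + μⱼᵢ) = −∇Jᵢ(x*) and λᵢⱼ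 + μᵢⱼ = 0 for all edges, the point (x, r, λ, μ) is a saddle point of L_ρ: L_ρ(x*, r*, λ, μ) ≤ L_ρ(x*, r*, λ*, μ*) ≤ L_ρ(x, r, λ*, μ*) for all (x, r). -/
open Finset

noncomputable def augLagrangian {d N : ℕ} (J : Fin N → EuclideanSpace ℝ (Fin d) → ℝ)
    (G : SimpleGraph (Fin N)) [DecidableRel G.Adj] (ρ : ℝ)
    (x : Fin N → EuclideanSpace ℝ (Fin d))
    (r lam mu : Fin N → Fin N → EuclideanSpace ℝ (Fin d)) : ℝ :=
  ∑ i, (J i (x i)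
    + ∑ j ∈ G.neighborFinset i,
        (inner ℝ (lam i j) (x i - r i j) + inner ℝ (mu i j) (x j - r i j) : ℝ)
    + (ρ / 2) * ∑ j ∈ G.neighborFinset i,
        (‖x i - r i j‖ ^ 2 + ‖x j - r i j‖ ^ 2))

/-- Gradient inequality for convex differentiable functions. -/
lemma conv_grad_ineq {E : Type*} [NormedAddCommGroup E] [InnerProductSpace ℝ E]
    [CompleteSpace E] {f : E → ℝ}
    (hc : ConvexOn ℝ Set.univ f) (hd : Differentiable ℝ f) (x y : E) :
    f x + inner ℝ (gradient f x) (y - x) ≤ f y := by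
  have hgrad : HasFDerivAt f (InnerProductSpace.toDual ℝ E (gradient f x)) x :=
    hasGradientAt_iff_hasFDerivAt.mp (hd x).hasGradientAt
  have hline : HasDerivAt (fun t : ℝ => x + t • (y - x)) (y - x) 0 := by
    simpa using ((hasDerivAt_id (0 : ℝ)).smul_const (y - x)).const_add x
  have hg : HasDerivAt (fun t : ℝ => f (x + t • (y - x)))
      ((inner ℝ (gradient f x) (y - x) : ℝ)) 0 := by
    have h0 : x + (0 : ℝ) • (y - x) = x := by simp
    have := (h0 ▸ hgrad).comp_hasDerivAt 0 hline
    simpa only [InnerProductSpace.toDual_apply_apply, Function.comp_def, h0] using this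
  have hgc : ConvexOn ℝ Set.univ (fun t : ℝ => f (x + t • (y - x))) := by
    have := hc.comp_affineMap (AffineMap.lineMap x y : ℝ →ᵃ[ℝ] E)
    simp only [Set.preimage_univ] at this
    have heq : (f ∘ ⇑(AffineMap.lineMap x y)) = fun t : ℝ => f (x + t • (y - x)) := by
      funext t
      simp only [Function.comp_apply, AffineMap.lineMap_apply, vsub_eq_sub, vadd_eq_add]
      rw [add_comm]
    rwa [heq] at this
  have hslope := hgc.le_slope_of_hasDerivAt (Set.mem_univ (0 : ℝ))
    (Set.mem_univ (1 : ℝ)) zero_lt_one hg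
  simp [slope_def_field] at hslope ⊢
  linarith [hslope]

/-- Swapping a double sum over neighbors in a simple graph. -/
lemma nbr_swap {N : ℕ} (G : SimpleGraph (Fin N)) [DecidableRel G.Adj]
    (f : Fin N → Fin N → ℝ) :
    ∑ i, ∑ j ∈ G.neighborFinset i, f i j = ∑ i, ∑ j ∈ G.neighborFinset i, f j i := by
  have h : ∀ g : Fin N → Fin N → ℝ,
      ∑ i, ∑ j ∈ G.neighborFinset i, g i j
        = ∑ i, ∑ j, if G.Adj i j then g i j else 0 := by
    intro g
    refine Finset.sum_congr rfl fun i _ => ?_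
    rw [SimpleGraph.neighborFinset_eq_filter, Finset.sum_filter]
  rw [h, h, Finset.sum_comm]
  refine Finset.sum_congr rfl fun j _ => Finset.sum_congr rfl fun i _ => ?_
  simp only [G.adj_comm j i]

theorem stmt_10 {d N : ℕ} (J : Fin N → EuclideanSpace ℝ (Fin d) → ℝ)
    (hconv : ∀ i, ConvexOn ℝ Set.univ (J i))
    (hdiff : ∀ i, Differentiable ℝ (J i))
    (G : SimpleGraph (Fin N)) [DecidableRel G.Adj] (hG : G.Connected)
    (ρ : ℝ) (hρ : 0 < ρ)
    (xs : EuclideanSpace ℝ (Fin d))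
    (hmin : ∀ x, ∑ i, J i xs ≤ ∑ i, J i x)
    (lam mu : Fin N → Fin N → EuclideanSpace ℝ (Fin d))
    (hlam : ∀ i, ∑ j ∈ G.neighborFinset i, (lam i j + mu j i) = -(gradient (J i) xs))
    (hmu : ∀ i j, G.Adj i j → lam i j + mu i j = 0) :
    (∀ lam' mu' : Fin N → Fin N → EuclideanSpace ℝ (Fin d),
        augLagrangian J G ρ (fun _ => xs) (fun _ _ => xs) lam' mu' ≤
          augLagrangian J G ρ (fun _ => xs) (fun _ _ => xs) lam mu) ∧
      (∀ x r,
        augLagrangian J G ρ (fun _ => xs) (fun _ _ => xs) lam mu ≤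
          augLagrangian J G ρ x r lam mu) := by
  set g : Fin N → EuclideanSpace ℝ (Fin d) := fun i => gradient (J i) xs with hg
  have hval : ∀ lam' mu' : Fin N → Fin N → EuclideanSpace ℝ (Fin d),
      augLagrangian J G ρ (fun _ => xs) (fun _ _ => xs) lam' mu' = ∑ i, J i xs := by
    intro lam' mu'
    simp [augLagrangian]
  have hgradf : ∀ i, HasFDerivAt (J i)
      (InnerProductSpace.toDual ℝ (EuclideanSpace ℝ (Fin d)) (g i)) xs := fun i =>
    hasGradientAt_iff_hasFDerivAt.mp ((hdiff i) xs).hasGradientAt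
  have hfder : ∀ i v, (fderiv ℝ (J i) xs) v = (inner ℝ (g i) v : ℝ) := by
    intro i v
    rw [(hgradf i).fderiv, InnerProductSpace.toDual_apply_apply]
  have hsum0 : ∀ v, ∑ i, (inner ℝ (g i) v : ℝ) = 0 := by
    intro v
    have hloc : IsLocalMin (fun y => ∑ i, J i y) xs :=
      Filter.Eventually.of_forall hmin
    have hf0 : fderiv ℝ (fun y => ∑ i, J i y) xs = 0 := hloc.fderiv_eq_zero
    have hsum : fderiv ℝ (fun y => ∑ i, J i y) xs = ∑ i, fderiv ℝ (J i) xs :=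
      fderiv_fun_sum fun i _ => ((hdiff i) xs)
    calc ∑ i, (inner ℝ (g i) v : ℝ) = ∑ i, (fderiv ℝ (J i) xs) v := by
          simp [hfder]
      _ = (∑ i, fderiv ℝ (J i) xs) v := by
          simp [ContinuousLinearMap.sum_apply]
      _ = 0 := by rw [← hsum, hf0]; rfl
  refine ⟨fun lam' mu' => by rw [hval, hval], fun x r => ?_⟩
  rw [hval]
  -- The double-sum linear term equals ∑ i, ⟪-(g i), x i⟫
  have hB : ∑ i, ∑ j ∈ G.neighborFinset i,
      ((inner ℝ (lam i j) (x i - r i j) : ℝ) + inner ℝ (mu i j) (x j - r i j))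
      = ∑ i, (inner ℝ (-(g i)) (x i) : ℝ) := by
    have step1 : ∀ i, ∑ j ∈ G.neighborFinset i,
        ((inner ℝ (lam i j) (x i - r i j) : ℝ) + inner ℝ (mu i j) (x j - r i j))
        = ∑ j ∈ G.neighborFinset i, ((inner ℝ (lam i j) (x i) : ℝ) + inner ℝ (mu i j) (x j)) := by
      intro i
      refine Finset.sum_congr rfl fun j hj => ?_
      have hadj : G.Adj i j := (SimpleGraph.mem_neighborFinset G i j).mp hj
      have hmuij : mu i j = -(lam i j) := by
        have h := hmu i j hadj
        rw [add_comm] at h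
        exact eq_neg_of_add_eq_zero_left h
      rw [inner_sub_right, inner_sub_right, hmuij, inner_neg_left, inner_neg_left]
      ring
    calc ∑ i, ∑ j ∈ G.neighborFinset i,
          ((inner ℝ (lam i j) (x i - r i j) : ℝ) + inner ℝ (mu i j) (x j - r i j))
        = ∑ i, ∑ j ∈ G.neighborFinset i,
            ((inner ℝ (lam i j) (x i) : ℝ) + inner ℝ (mu i j) (x j)) := by
          exact Finset.sum_congr rfl fun i _ => step1 i
      _ = ∑ i, ∑ j ∈ G.neighborFinset i, (inner ℝ (lam i j) (x i) : ℝ)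
            + ∑ i, ∑ j ∈ G.neighborFinset i, (inner ℝ (mu i j) (x j) : ℝ) := by
          rw [← Finset.sum_add_distrib]
          exact Finset.sum_congr rfl fun i _ => by rw [← Finset.sum_add_distrib]
      _ = ∑ i, ∑ j ∈ G.neighborFinset i, (inner ℝ (lam i j) (x i) : ℝ)
            + ∑ i, ∑ j ∈ G.neighborFinset i, (inner ℝ (mu j i) (x i) : ℝ) := by
          rw [nbr_swap G (fun i j => (inner ℝ (mu i j) (x j) : ℝ))]
      _ = ∑ i, ∑ j ∈ G.neighborFinset i, ((inner ℝ (lam i j) (x i) : ℝ) + inner ℝ (mu j i) (x i)) := by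
          rw [← Finset.sum_add_distrib]
          exact Finset.sum_congr rfl fun i _ => by rw [← Finset.sum_add_distrib]
      _ = ∑ i, (inner ℝ (-(g i)) (x i) : ℝ) := by
          refine Finset.sum_congr rfl fun i _ => ?_
          rw [← hlam i, sum_inner]
          exact Finset.sum_congr rfl fun j _ => by rw [inner_add_left]
  have hC : ∀ i, 0 ≤ (ρ / 2) * ∑ j ∈ G.neighborFinset i,
      (‖x i - r i j‖ ^ 2 + ‖x j - r i j‖ ^ 2) := by
    intro i
    apply mul_nonneg (by linarith)
    exact Finset.sum_nonneg fun j _ => by positivity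
  have hconvineq : ∀ i, J i xs + (inner ℝ (g i) (x i) : ℝ) - inner ℝ (g i) xs ≤ J i (x i) := by
    intro i
    have := conv_grad_ineq (hconv i) (hdiff i) xs (x i)
    rw [inner_sub_right] at this
    linarith
  have hsumconv : ∑ i, J i xs ≤ ∑ i, (J i (x i) + (inner ℝ (-(g i)) (x i) : ℝ)) := by
    have h1 : ∑ i, (J i xs + (inner ℝ (g i) (x i) : ℝ) - inner ℝ (g i) xs)
        ≤ ∑ i, J i (x i) := Finset.sum_le_sum fun i _ => hconvineq i
    have h2 : ∑ i, (J i xs + (inner ℝ (g i) (x i) : ℝ) - inner ℝ (g i) xs)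
        = ∑ i, J i xs + ∑ i, (inner ℝ (g i) (x i) : ℝ) - ∑ i, (inner ℝ (g i) xs : ℝ) := by
      rw [Finset.sum_sub_distrib, Finset.sum_add_distrib]
    rw [h2, hsum0 xs, sub_zero] at h1
    rw [Finset.sum_add_distrib]
    have h3 : ∑ i, (inner ℝ (-(g i)) (x i) : ℝ) = -∑ i, (inner ℝ (g i) (x i) : ℝ) := by
      rw [← Finset.sum_neg_distrib]
      exact Finset.sum_congr rfl fun i _ => inner_neg_left _ _
    rw [h3]
    linarith
  unfold augLagrangian
  rw [Finset.sum_add_distrib, Finset.sum_add_distrib, hB]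
  have := Finset.sum_nonneg (fun i (_ : i ∈ Finset.univ) => hC i)
  calc ∑ i, J i xs ≤ ∑ i, (J i (x i) + (inner ℝ (-(g i)) (x i) : ℝ)) := hsumconv
    _ = ∑ i, J i (x i) + ∑ i, (inner ℝ (-(g i)) (x i) : ℝ) := Finset.sum_add_distrib
    _ ≤ _ := by linarith
end
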